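/- Let G be a group generated by a finite set S, with word metric d, and let H ≤ G be a subgroup. Suppose H has the following superlinear divergence property: for every L ≥ 0 there exists K ≥ 0 such that for all h₁, h₂ ∈ H, all r₁, r₂ with 0 < r₁ < r₂ < d(h₁,h₂), and every 1-Lipschitz discrete path α from h₁ to h₂ whose image is disjoint from the closed K-neighbourhood of A(h₁,r₁,r₂) = {h ∈ H : r₁ ≤ d(h₁,h) ≤ r₂}, one has l(α) ≥ L(r₂ − r₁). Then for all μ ≥ 1 and c ≥ 0 there exists C ≥ 0 such that every (μ,c)-quasi-geodesic in (G,d) whose endpoints lie in H is contained in the closed C-neighbourhood of H. -/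

import Mathlib

/-- The word metric on a group `G` with respect to a generating set `Y`:
`wordDist Y g h` is the least length of a word in `Y ∪ Y⁻¹` representing `g⁻¹ * h`. -/
noncomputable def wordDist {G : Type*} [Group G] (Y : Set G) (g h : G) : ℕ :=
  sInf {n : ℕ | ∃ w : List G, w.length = n ∧ (∀ t ∈ w, t ∈ Y ∪ Y⁻¹) ∧ w.prod = g⁻¹ * h}

section WD
variable {G : Type*} [Group G] {Y : Set G}

lemma wordDist_le {g h : G} {w : List G} (hw : ∀ t ∈ w, t ∈ Y ∪ Y⁻¹)
    (hp : w.prod = g⁻¹ * h) : wordDist Y g h ≤ w.length :=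
  Nat.sInf_le ⟨w, rfl, hw, hp⟩

lemma exists_word (hY : Subgroup.closure Y = ⊤) (g h : G) :
    ∃ w : List G, w.length = wordDist Y g h ∧ (∀ t ∈ w, t ∈ Y ∪ Y⁻¹) ∧ w.prod = g⁻¹ * h := by
  have hx : g⁻¹ * h ∈ Submonoid.closure (Y ∪ Y⁻¹) := by
    rw [← Subgroup.closure_toSubmonoid]
    show g⁻¹ * h ∈ Subgroup.closure Y
    rw [hY]; trivial
  obtain ⟨l, hl, hp⟩ := Submonoid.exists_list_of_mem_closure hx
  have hne : {n : ℕ | ∃ w : List G, w.length = n ∧ (∀ t ∈ w, t ∈ Y ∪ Y⁻¹) ∧ w.prod = g⁻¹ * h}.Nonempty :=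
    ⟨l.length, l, rfl, hl, hp⟩
  exact Nat.sInf_mem hne

lemma wordDist_self (g : G) : wordDist Y g g = 0 :=
  Nat.le_zero.mp (by simpa using wordDist_le (w := ([] : List G)) (by simp) (by simp))

lemma wordDist_triangle (hY : Subgroup.closure Y = ⊤) (g h k : G) :
    wordDist Y g k ≤ wordDist Y g h + wordDist Y h k := by
  obtain ⟨w₁, e₁, l₁, p₁⟩ := exists_word hY g h
  obtain ⟨w₂, e₂, l₂, p₂⟩ := exists_word hY h k
  have := wordDist_le (g := g) (h := k) (w := w₁ ++ w₂)
    (by intro t ht; rcases List.mem_append.mp ht with h' | h'; exacts [l₁ t h', l₂ t h'])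
    (by rw [List.prod_append, p₁, p₂]; group)
  simpa [e₁, e₂] using this

lemma wordDist_symm (hY : Subgroup.closure Y = ⊤) (g h : G) :
    wordDist Y g h = wordDist Y h g := by
  have key : ∀ a b : G, wordDist Y b a ≤ wordDist Y a b := by
    intro a b
    obtain ⟨w, e, l, p⟩ := exists_word hY a b
    have := wordDist_le (g := b) (h := a) (w := (w.map Inv.inv).reverse)
      (by
        intro t ht
        simp only [List.mem_reverse, List.mem_map] at ht
        obtain ⟨u, hu, rfl⟩ := ht
        rcases l u hu with h' | h'
        · exact Or.inr (by simpa using h')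
        · exact Or.inl (by simpa using h'))
      (by rw [← List.prod_inv_reverse, p]; group)
    simpa [e] using this
  exact le_antisymm (key h g) (key g h)

lemma wordDist_mul_left (k g h : G) : wordDist Y (k * g) (k * h) = wordDist Y g h := by
  unfold wordDist
  congr 1
  ext n
  constructor <;> (rintro ⟨w, hl, hw, hp⟩; exact ⟨w, hl, hw, by rw [hp]; group⟩)

end WD

/-- Concatenation of the words `f a, f (a+1), ..., f (a+n-1)`. -/
def wchain {G : Type*} (f : ℤ → List G) (a : ℤ) : ℕ → List G
  | 0 => []
  | n + 1 => wchain f a n ++ f (a + n)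

section Chain
variable {G : Type*} [Group G] {Y : Set G} {f : ℤ → List G} {a : ℤ} {Q : ℤ → G}

lemma wchain_letters (hfl : ∀ i, ∀ t ∈ f i, t ∈ Y ∪ Y⁻¹) :
    ∀ n, ∀ t ∈ wchain f a n, t ∈ Y ∪ Y⁻¹ := by
  intro n
  induction n with
  | zero => intro t ht; simp [wchain] at ht
  | succ n ih =>
    intro t ht
    rcases List.mem_append.mp ht with h' | h'
    · exact ih t h'
    · exact hfl _ t h'

lemma wchain_prod (hf : ∀ i, (f i).prod = (Q i)⁻¹ * Q (i + 1)) :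
    ∀ n, (wchain f a n).prod = (Q a)⁻¹ * Q (a + n) := by
  intro n
  induction n with
  | zero => simp [wchain]
  | succ n ih =>
    show (wchain f a n ++ f (a + n)).prod = _
    rw [List.prod_append, ih, hf]
    have : (a + n : ℤ) + 1 = a + ((n : ℕ) + 1 : ℕ) := by push_cast; ring
    rw [← this]; group

lemma wchain_length :
    ∀ n, (wchain f a n).length = ∑ k ∈ Finset.range n, (f (a + k)).length := by
  intro n
  induction n with
  | zero => simp [wchain]
  | succ n ih =>
    show (wchain f a n ++ f (a + n)).length = _
    rw [List.length_append, ih, Finset.sum_range_succ]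

lemma wchain_take (hf : ∀ i, (f i).prod = (Q i)⁻¹ * Q (i + 1))
    (hfl : ∀ i, ∀ t ∈ f i, t ∈ Y ∪ Y⁻¹) :
    ∀ n, 0 < n → ∀ j, j ≤ (wchain f a n).length →
      ∃ k : ℕ, k < n ∧
        wordDist Y (Q (a + k)) (Q a * ((wchain f a n).take j).prod) ≤ (f (a + k)).length := by
  intro n
  induction n with
  | zero => omega
  | succ n ih =>
    intro _ j hj
    by_cases hn : n = 0
    · subst hn
      refine ⟨0, by omega, ?_⟩
      have he : wchain f a 1 = f (a + 0) := by
        show [] ++ f (a + (0:ℕ)) = f (a + 0); simp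
      rw [he] at hj ⊢
      refine le_trans (wordDist_le (w := (f (a + 0)).take j) ?_ ?_)
        (by rw [List.length_take]; exact min_le_right _ _)
      · intro t ht; exact hfl _ t (List.take_subset _ _ ht)
      · push_cast; group
    · rcases le_or_gt j (wchain f a n).length with hle | hlt
      · obtain ⟨k, hk, hd⟩ := ih (by omega) j hle
        refine ⟨k, by omega, ?_⟩
        have : (wchain f a (n+1)).take j = (wchain f a n).take j := by
          show (wchain f a n ++ f (a + n)).take j = _
          exact List.take_append_of_le_length hle
        rw [this]; exact hd
      · refine ⟨n, by omega, ?_⟩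
        have hlen : j ≤ (wchain f a n ++ f (a + n)).length := hj
        rw [List.length_append] at hlen
        set r : ℕ := j - (wchain f a n).length with hr
        have hjr : j = (wchain f a n).length + r := by omega
        have htake : (wchain f a (n+1)).take j = wchain f a n ++ (f (a + n)).take r := by
          show (wchain f a n ++ f (a + n)).take j = _
          rw [hjr]; exact List.take_length_add_append r
        rw [htake]
        refine le_trans (wordDist_le (w := (f (a + n)).take r) ?_ ?_)
          (by rw [List.length_take]; exact min_le_right _ _)
        · intro t ht; exact hfl _ t (List.take_subset _ _ ht)
        · rw [List.prod_append, wchain_prod hf]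
          group
end Chain

set_option maxHeartbeats 2000000 in
lemma core_int {G : Type*} [Group G]
    (S : Finset G) (hS : Subgroup.closure (S : Set G) = ⊤)
    (H : Subgroup G)
    (hdiv : ∀ L : ℝ, 0 ≤ L → ∃ K : ℝ, 0 ≤ K ∧
      ∀ h₁ ∈ H, ∀ h₂ ∈ H, ∀ r₁ r₂ : ℝ, 0 < r₁ → r₁ < r₂ →
        r₂ < (wordDist (S : Set G) h₁ h₂ : ℝ) →
      ∀ (m n : ℤ), m ≤ n → ∀ α : ℤ → G, α m = h₁ → α n = h₂ →
        (∀ i : ℤ, m ≤ i → i < n → (wordDist (S : Set G) (α i) (α (i + 1)) : ℝ) ≤ 1) →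
        (∀ i : ℤ, m ≤ i → i ≤ n → ∀ h ∈ H,
          r₁ ≤ (wordDist (S : Set G) h₁ h : ℝ) → (wordDist (S : Set G) h₁ h : ℝ) ≤ r₂ →
          ¬ (wordDist (S : Set G) (α i) h : ℝ) ≤ K) →
        L * (r₂ - r₁) ≤
          ∑ i ∈ Finset.Ico m n, (wordDist (S : Set G) (α i) (α (i + 1)) : ℝ))
    (μ c : ℝ) (hμ : 1 ≤ μ) (hc : 0 ≤ c) :
    ∃ C : ℝ, 0 ≤ C ∧ ∀ m n : ℤ, m ≤ n → ∀ q : ℤ → G,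
      (∀ s ∈ Set.Icc m n, ∀ t ∈ Set.Icc m n,
        |(s : ℝ) - (t : ℝ)| / μ - c ≤ (wordDist (S : Set G) (q s) (q t) : ℝ) ∧
        (wordDist (S : Set G) (q s) (q t) : ℝ) ≤ μ * |(s : ℝ) - (t : ℝ)| + c) →
      q m ∈ H → q n ∈ H →
      ∀ s ∈ Set.Icc m n, ∃ h ∈ H, (wordDist (S : Set G) (q s) h : ℝ) ≤ C := by
  classical
  set Y : Set G := (S : Set G) with hY
  have hμ0 : (0:ℝ) < μ := by linarith
  have hμc : (1:ℝ) ≤ μ + c := by linarith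
  set L : ℝ := 2 * μ * (μ + c) with hLdef
  have hL : 0 ≤ L := by nlinarith
  obtain ⟨K, hK, hdivK⟩ := hdiv L hL
  set B : ℝ := K + μ + c with hBdef
  have hB : 0 ≤ B := by linarith
  set E₀ : ℝ := c + 2 * B + 2 * (K + 2 * B + 1) with hE₀def
  have hE₀ : 0 ≤ E₀ := by linarith
  set T : ℝ := 2 * B + 2 * μ * (μ + c) * E₀ + μ * E₀ + 1 with hTdef
  have hT1 : 1 ≤ T := by nlinarith
  have hTE : μ * E₀ ≤ T := by nlinarith
  set C : ℝ := c + B + μ * T with hCdef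
  have hC : 0 ≤ C := by nlinarith
  clear_value L B E₀ T C
  refine ⟨C, hC, ?_⟩
  intro m n hmn q hq hqm hqn s hs
  by_contra hcon
  push_neg at hcon
  -- real-valued distance facts
  have dtri : ∀ x y z : G, (wordDist Y x z : ℝ) ≤ wordDist Y x y + wordDist Y y z := by
    intro x y z; exact_mod_cast wordDist_triangle hS x y z
  have dsymm : ∀ x y : G, (wordDist Y x y : ℝ) = wordDist Y y x := by
    intro x y; exact congrArg Nat.cast (wordDist_symm hS x y)
  have dnn : ∀ x y : G, (0:ℝ) ≤ wordDist Y x y := fun x y => Nat.cast_nonneg _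
  obtain ⟨hms, hsn⟩ := hs
  -- entry and exit points
  set P : ℤ → Prop := fun i => ∃ h ∈ H, (wordDist Y (q i) h : ℝ) ≤ B with hPdef
  have hPm : P m := ⟨q m, hqm, by rw [wordDist_self]; simpa using hB⟩
  have hPn : P n := ⟨q n, hqn, by rw [wordDist_self]; simpa using hB⟩
  set t₁ : Finset ℤ := (Finset.Icc m s).filter P with ht₁
  set t₂ : Finset ℤ := (Finset.Icc s n).filter P with ht₂
  have ht₁ne : t₁.Nonempty := ⟨m, Finset.mem_filter.mpr ⟨Finset.mem_Icc.mpr ⟨le_refl m, hms⟩, hPm⟩⟩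
  have ht₂ne : t₂.Nonempty := ⟨n, Finset.mem_filter.mpr ⟨Finset.mem_Icc.mpr ⟨hsn, le_refl n⟩, hPn⟩⟩
  set a : ℤ := t₁.max' ht₁ne with hadef
  set b : ℤ := t₂.min' ht₂ne with hbdef
  have hamem := Finset.max'_mem t₁ ht₁ne
  have hbmem := Finset.min'_mem t₂ ht₂ne
  rw [Finset.mem_filter, Finset.mem_Icc] at hamem hbmem
  obtain ⟨⟨hma, has⟩, h₁w, h₁H, h₁d⟩ := hamem
  obtain ⟨⟨hsb, hbn⟩, h₂w, h₂H, h₂d⟩ := hbmem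
  have hamax : ∀ i : ℤ, a < i → i ≤ s → ¬ P i := by
    intro i hai his hPi
    exact absurd (Finset.le_max' t₁ i (Finset.mem_filter.mpr
      ⟨Finset.mem_Icc.mpr ⟨le_trans hma (le_of_lt hai), his⟩, hPi⟩)) (not_le.mpr hai)
  have hbmin : ∀ i : ℤ, s ≤ i → i < b → ¬ P i := by
    intro i hsi hib hPi
    exact absurd (Finset.min'_le t₂ i (Finset.mem_filter.mpr
      ⟨Finset.mem_Icc.mpr ⟨hsi, le_trans (le_of_lt hib) hbn⟩, hPi⟩)) (not_le.mpr hib)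
  have hab : a ≤ b := le_trans has hsb
  set N : ℕ := (b - a).toNat with hNdef
  have hNcast : (N : ℤ) = b - a := Int.toNat_of_nonneg (by omega)
  -- the extended sequence
  set Q : ℤ → G := fun i => if i < a then h₁w else if i ≤ b then q i else h₂w with hQdef
  have hQa1 : Q (a - 1) = h₁w := by simp only [hQdef]; rw [if_pos (by omega)]
  have hQb1 : Q (b + 1) = h₂w := by
    simp only [hQdef]; rw [if_neg (by omega), if_neg (by omega)]
  have hQmid : ∀ i : ℤ, a ≤ i → i ≤ b → Q i = q i := by
    intro i h1 h2; simp only [hQdef]; rw [if_neg (by omega), if_pos h2]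
  -- geodesic words
  set f : ℤ → List G := fun i => Classical.choose (exists_word hS (Q i) (Q (i + 1))) with hfdef
  have fspec : ∀ i : ℤ, (f i).length = wordDist Y (Q i) (Q (i + 1)) ∧
      (∀ t ∈ f i, t ∈ Y ∪ Y⁻¹) ∧ (f i).prod = (Q i)⁻¹ * Q (i + 1) := by
    intro i; exact Classical.choose_spec (exists_word hS (Q i) (Q (i + 1)))
  have fprod : ∀ i : ℤ, (f i).prod = (Q i)⁻¹ * Q (i + 1) := fun i => (fspec i).2.2
  have fletters : ∀ i : ℤ, ∀ t ∈ f i, t ∈ Y ∪ Y⁻¹ := fun i => (fspec i).2.1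
  have flen : ∀ i : ℤ, ((f i).length : ℝ) = (wordDist Y (Q i) (Q (i + 1)) : ℝ) := by
    intro i; exact congrArg Nat.cast (fspec i).1
  set W : List G := wchain f (a - 1) (N + 2) with hWdef
  set α : ℤ → G := fun j => Q (a - 1) * ((W.take j.toNat).prod) with hαdef
  have hα0 : α 0 = h₁w := by simp [hαdef, hQa1]
  have hend : (a - 1) + ((N : ℤ) + 2) = b + 1 := by omega
  have hαn : α (W.length : ℤ) = h₂w := by
    simp only [hαdef, Int.toNat_natCast, List.take_length]
    rw [wchain_prod fprod]
    push_cast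
    rw [hend, hQa1, hQb1]
    group
  -- step bound
  have hstep : ∀ j : ℤ, 0 ≤ j → j < (W.length : ℤ) →
      (wordDist Y (α j) (α (j + 1)) : ℝ) ≤ 1 := by
    intro j hj0 hjW
    have hjn : j.toNat < W.length := by omega
    have hjn1 : (j + 1).toNat = j.toNat + 1 := by omega
    have hnat : wordDist Y (α j) (α (j + 1)) ≤ 1 := by
      have := wordDist_le (Y := Y) (g := α j) (h := α (j + 1))
        (w := [W.get ⟨j.toNat, hjn⟩])
        (by
          intro t ht
          simp only [List.mem_singleton] at ht
          subst ht
          have hmemW : W.get ⟨j.toNat, hjn⟩ ∈ W := List.get_mem W ⟨j.toNat, hjn⟩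
          exact wchain_letters fletters _ _ hmemW)
        (by
          simp only [hαdef, List.prod_cons, List.prod_nil, mul_one, hjn1]
          rw [List.prod_take_succ _ _ hjn]
          group
          rfl)
      simpa using this
    exact_mod_cast hnat
  rw [← hadef] at h₁d has hma
  rw [← hbdef] at h₂d hsb hbn
  -- quasi-geodesic step bound in the middle
  have hqstep : ∀ i : ℤ, a ≤ i → i < b → (wordDist Y (q i) (q (i + 1)) : ℝ) ≤ μ + c := by
    intro i h1 h2
    have hmem1 : i ∈ Set.Icc m n := Set.mem_Icc.mpr ⟨le_trans hma h1, by omega⟩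
    have hmem2 : i + 1 ∈ Set.Icc m n := Set.mem_Icc.mpr ⟨by omega, by omega⟩
    have hup := (hq i hmem1 (i + 1) hmem2).2
    have habs : |(i : ℝ) - ((i + 1 : ℤ) : ℝ)| = 1 := by push_cast; rw [abs_sub_comm]; simp
    rw [habs, mul_one] at hup
    exact hup
  -- bounds on the lengths of the pieces
  have hf0 : ((f (a - 1)).length : ℝ) ≤ B := by
    rw [flen]
    have e1 : a - 1 + 1 = a := by ring
    rw [e1, hQa1, hQmid a le_rfl hab, dsymm]
    exact h₁d
  have hfb : ((f b).length : ℝ) ≤ B := by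
    rw [flen, hQb1, hQmid b hab le_rfl]
    exact h₂d
  have hfmid : ∀ k : ℕ, 1 ≤ k → k ≤ N → ((f (a - 1 + k)).length : ℝ) ≤ μ + c := by
    intro k hk1 hkN
    have h1 : a ≤ a - 1 + (k : ℤ) := by omega
    have h2 : a - 1 + (k : ℤ) < b := by omega
    rw [flen, hQmid _ h1 (by omega), hQmid (a - 1 + (k : ℤ) + 1) (by omega) (by omega)]
    exact hqstep _ h1 h2
  -- total length bound
  have hWlen : ((W.length : ℕ) : ℝ) ≤ B + (N : ℝ) * (μ + c) + B := by
    have hl : ((W.length : ℕ) : ℝ) = ∑ k ∈ Finset.range (N + 2), ((f (a - 1 + k)).length : ℝ) := by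
      rw [show W = wchain f (a - 1) (N + 2) from rfl, wchain_length]
      push_cast
      rfl
    rw [hl, Finset.sum_range_succ, Finset.sum_range_succ']
    have hend2 : a - 1 + ((N : ℤ) + 1) = b := by omega
    have hlast : ((f (a - 1 + ((N + 1 : ℕ) : ℤ))).length : ℝ) ≤ B := by
      rw [show (a - 1 + ((N + 1 : ℕ) : ℤ)) = b by push_cast; omega]
      exact hfb
    have hfirst : ((f (a - 1 + ((0 : ℕ) : ℤ))).length : ℝ) ≤ B := by
      rw [show (a - 1 + ((0 : ℕ) : ℤ)) = a - 1 by push_cast; ring]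
      exact hf0
    have hmidsum : ∑ k ∈ Finset.range N, ((f (a - 1 + ((k + 1 : ℕ) : ℤ))).length : ℝ)
        ≤ (N : ℝ) * (μ + c) := by
      have := Finset.sum_le_card_nsmul (Finset.range N)
        (fun k : ℕ => ((f (a - 1 + ((k + 1 : ℕ) : ℤ))).length : ℝ)) (μ + c)
        (fun k hk => hfmid (k + 1) (by omega) (by
          have := Finset.mem_range.mp hk; omega))
      rw [Finset.card_range, nsmul_eq_mul] at this
      exact this
    linarith
  -- entry and exit estimates
  have hsa : C - c - B < μ * ((s : ℝ) - (a : ℝ)) := by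
    have hmem1 : s ∈ Set.Icc m n := Set.mem_Icc.mpr ⟨hms, hsn⟩
    have hmem2 : a ∈ Set.Icc m n := Set.mem_Icc.mpr ⟨hma, by omega⟩
    have hup := (hq s hmem1 a hmem2).2
    have habs : |(s : ℝ) - (a : ℝ)| = (s : ℝ) - (a : ℝ) := by
      rw [abs_of_nonneg]; rw [sub_nonneg]; exact_mod_cast has
    rw [habs] at hup
    have htr := dtri (q s) (q a) h₁w
    have hcon1 := hcon h₁w h₁H
    linarith
  have hsb' : C - c - B < μ * ((b : ℝ) - (s : ℝ)) := by
    have hmem1 : s ∈ Set.Icc m n := Set.mem_Icc.mpr ⟨hms, hsn⟩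
    have hmem2 : b ∈ Set.Icc m n := Set.mem_Icc.mpr ⟨by omega, hbn⟩
    have hup := (hq s hmem1 b hmem2).2
    have habs : |(s : ℝ) - (b : ℝ)| = (b : ℝ) - (s : ℝ) := by
      rw [abs_sub_comm, abs_of_nonneg]; rw [sub_nonneg]; exact_mod_cast hsb
    rw [habs] at hup
    have htr := dtri (q s) (q b) h₂w
    have hcon2 := hcon h₂w h₂H
    linarith
  set X : ℝ := (b : ℝ) - (a : ℝ) with hXdef
  clear_value X
  have hX0 : 0 ≤ X := by rw [hXdef, sub_nonneg]; exact_mod_cast hab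
  have hXmu : 2 * (C - c - B) < μ * X := by
    have : μ * X = μ * ((s : ℝ) - (a : ℝ)) + μ * ((b : ℝ) - (s : ℝ)) := by rw [hXdef]; ring
    linarith
  have hXT : 2 * T < X := by
    have h1 : μ * (2 * T) < μ * X := by
      have : C - c - B = μ * T := by rw [hCdef]; ring
      linarith
    exact lt_of_mul_lt_mul_left h1 (le_of_lt hμ0)
  -- distance between the anchor points
  set D : ℝ := (wordDist Y h₁w h₂w : ℝ) with hDdef
  clear_value D
  have hD : X / μ - c - 2 * B ≤ D := by
    have hmem1 : a ∈ Set.Icc m n := Set.mem_Icc.mpr ⟨hma, by omega⟩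
    have hmem2 : b ∈ Set.Icc m n := Set.mem_Icc.mpr ⟨by omega, hbn⟩
    have hlow := (hq a hmem1 b hmem2).1
    have habs : |(a : ℝ) - (b : ℝ)| = X := by
      rw [abs_sub_comm, hXdef, abs_of_nonneg]
      rw [sub_nonneg]; exact_mod_cast hab
    rw [habs] at hlow
    have t1 := dtri (q a) h₁w (q b)
    have t2 := dtri h₁w h₂w (q b)
    have t3 : (wordDist Y (q b) h₂w : ℝ) = wordDist Y h₂w (q b) := dsymm _ _
    have t4 : (wordDist Y (q a) h₁w : ℝ) = wordDist Y h₁w (q a) := dsymm _ _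
    have t5 := dtri h₁w (q a) (q b)
    have t6 := dtri h₁w (q b) h₂w
    linarith
  set r₁ : ℝ := K + 2 * B + 1 with hr₁def
  set r₂ : ℝ := D - (K + 2 * B + 1) with hr₂def
  clear_value r₁ r₂
  have hr₁pos : 0 < r₁ := by rw [hr₁def]; linarith
  have hXE : μ * E₀ < X := by linarith
  have hXE' : E₀ < X / μ := by
    rw [lt_div_iff₀ hμ0]; linarith [hXE]
  have hr12 : r₁ < r₂ := by linarith
  have hr2D : r₂ < D := by rw [hr₂def]; linarith
  -- avoidance
  have havoid : ∀ i : ℤ, 0 ≤ i → i ≤ (W.length : ℤ) → ∀ h ∈ H,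
      r₁ ≤ (wordDist Y h₁w h : ℝ) → (wordDist Y h₁w h : ℝ) ≤ r₂ →
      ¬ (wordDist Y (α i) h : ℝ) ≤ K := by
    intro i hi0 hiW h hH hhr1 hhr2 hxK
    have hjn : i.toNat ≤ W.length := by omega
    obtain ⟨k, hkN, hkd⟩ := wchain_take fprod fletters (N + 2) (by omega) i.toNat hjn
    have hkdr : (wordDist Y (Q (a - 1 + (k : ℤ))) (α i) : ℝ) ≤ ((f (a - 1 + (k : ℤ))).length : ℝ) := by
      exact_mod_cast hkd
    have hsymK : (wordDist Y h (α i) : ℝ) ≤ K := by rw [dsymm]; exact hxK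
    by_cases hk0 : k = 0
    · subst hk0
      rw [show (a - 1 + ((0 : ℕ) : ℤ)) = a - 1 by push_cast; ring] at hkdr
      rw [hQa1] at hkdr
      have h1 := dtri h₁w (α i) h
      have h2 : (wordDist Y (α i) h : ℝ) ≤ K := hxK
      have h3 : (wordDist Y h₁w (α i) : ℝ) ≤ B := le_trans hkdr hf0
      rw [hr₁def] at hhr1
      linarith
    by_cases hkb : k = N + 1
    · subst hkb
      rw [show (a - 1 + ((N + 1 : ℕ) : ℤ)) = b by push_cast; omega] at hkdr
      rw [hQmid b hab le_rfl] at hkdr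
      have h3 : (wordDist Y (q b) (α i) : ℝ) ≤ B := le_trans hkdr hfb
      have t1 := dtri h₁w h h₂w
      have t2 := dtri h (α i) h₂w
      have t3 := dtri (α i) (q b) h₂w
      have t4 : (wordDist Y (α i) (q b) : ℝ) = wordDist Y (q b) (α i) := dsymm _ _
      have t5 : (wordDist Y (q b) h₂w : ℝ) ≤ B := h₂d
      rw [hr₂def] at hhr2
      linarith
    · -- middle pieces
      have hk1 : 1 ≤ k := by omega
      have hkN' : k ≤ N := by omega
      have hmid : (wordDist Y (q (a - 1 + (k : ℤ))) (α i) : ℝ) ≤ μ + c := by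
        rw [← hQmid (a - 1 + (k : ℤ)) (by omega) (by omega)]
        exact le_trans hkdr (hfmid k hk1 hkN')
      by_cases hk1' : k = 1
      · subst hk1'
        rw [show (a - 1 + ((1 : ℕ) : ℤ)) = a by push_cast; ring] at hmid
        have t1 := dtri h₁w (q a) h
        have t2 := dtri (q a) (α i) h
        have t3 : (wordDist Y h₁w (q a) : ℝ) ≤ B := by rw [dsymm]; exact h₁d
        rw [hr₁def] at hhr1
        linarith [hBdef]
      · -- strictly interior : contradicts maximality/minimality
        have hint1 : a < a - 1 + (k : ℤ) := by omega
        have hint2 : a - 1 + (k : ℤ) < b := by omega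
        have hnP : ¬ P (a - 1 + (k : ℤ)) := by
          rcases le_or_gt (a - 1 + (k : ℤ)) s with hle | hlt
          · exact hamax _ hint1 hle
          · exact hbmin _ (le_of_lt hlt) hint2
        have hgt : ¬ ((wordDist Y (q (a - 1 + (k : ℤ))) h : ℝ) ≤ B) :=
          fun hle => hnP ⟨h, hH, hle⟩
        rw [not_le] at hgt
        have t2 := dtri (q (a - 1 + (k : ℤ))) (α i) h
        linarith [hBdef]
  -- apply the divergence hypothesis
  have hWle : (0 : ℤ) ≤ (W.length : ℤ) := Int.natCast_nonneg _
  have hsum := hdivK h₁w h₁H h₂w h₂H r₁ r₂ hr₁pos hr12 (by rw [← hDdef]; exact hr2D)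
    0 (W.length : ℤ) hWle α hα0 hαn (fun i hi1 hi2 => hstep i hi1 hi2) havoid
  have hsumle : ∑ i ∈ Finset.Ico (0 : ℤ) (W.length : ℤ), (wordDist Y (α i) (α (i + 1)) : ℝ)
      ≤ ((W.length : ℕ) : ℝ) := by
    have hcard : (Finset.Ico (0 : ℤ) (W.length : ℤ)).card = W.length := by
      rw [Int.card_Ico]; omega
    have := Finset.sum_le_card_nsmul (Finset.Ico (0 : ℤ) (W.length : ℤ))
      (fun i => (wordDist Y (α i) (α (i + 1)) : ℝ)) 1
      (fun i hi => by
        obtain ⟨h1, h2⟩ := Finset.mem_Ico.mp hi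
        exact hstep i h1 h2)
    rw [hcard, nsmul_eq_mul, mul_one] at this
    exact this
  have hXN : (N : ℝ) = X := by rw [hXdef]; exact_mod_cast hNcast
  have hfin1 : L * (r₂ - r₁) ≤ B + X * (μ + c) + B := by
    rw [← hXN]
    calc L * (r₂ - r₁) ≤ _ := hsum
    _ ≤ ((W.length : ℕ) : ℝ) := hsumle
    _ ≤ B + (N : ℝ) * (μ + c) + B := hWlen
  have hr21 : X / μ - E₀ ≤ r₂ - r₁ := by
    rw [hr₂def, hr₁def, hE₀def]
    linarith
  have hLX : L * (X / μ) = 2 * (μ + c) * X := by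
    rw [hLdef]; field_simp
  have hfin2 : L * (X / μ - E₀) ≤ L * (r₂ - r₁) := mul_le_mul_of_nonneg_left hr21 hL
  have hfin3 : 2 * (μ + c) * X - L * E₀ ≤ B + X * (μ + c) + B := by
    have : L * (X / μ - E₀) = L * (X / μ) - L * E₀ := by ring
    rw [this, hLX] at hfin2
    linarith
  have hfin4 : (μ + c) * X ≤ 2 * B + 2 * μ * (μ + c) * E₀ := by
    rw [hLdef] at hfin3
    linarith
  have hfin5 : X ≤ (μ + c) * X := by
    have h5a : 0 ≤ (μ + c - 1) * X := mul_nonneg (by linarith) hX0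
    have h5b : (μ + c - 1) * X = (μ + c) * X - X := by ring
    linarith
  have hmuE : 0 ≤ μ * E₀ := mul_nonneg (le_of_lt hμ0) hE₀
  linarith

/-- if a subgroup `H` of a finitely generated group `G` has the superlinear
divergence property (w.r.t. the word metric `d` of the finite generating set `S`), then
for all `μ ≥ 1`, `c ≥ 0` there is `C ≥ 0` such that every `(μ,c)`-quasi-geodesic (defined
on an interval of `ℝ` or of `ℤ`) with endpoints in `H` is contained in the closed
`C`-neighbourhood of `H`. -/
theorem quasiconvex_of_superlinear_divergence
    {G : Type*} [Group G]
    (S : Finset G) (hS : Subgroup.closure (S : Set G) = ⊤)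
    (H : Subgroup G)
    (hdiv : ∀ L : ℝ, 0 ≤ L → ∃ K : ℝ, 0 ≤ K ∧
      ∀ h₁ ∈ H, ∀ h₂ ∈ H, ∀ r₁ r₂ : ℝ, 0 < r₁ → r₁ < r₂ →
        r₂ < (wordDist (S : Set G) h₁ h₂ : ℝ) →
      ∀ (m n : ℤ), m ≤ n → ∀ α : ℤ → G, α m = h₁ → α n = h₂ →
        (∀ i : ℤ, m ≤ i → i < n → (wordDist (S : Set G) (α i) (α (i + 1)) : ℝ) ≤ 1) →
        (∀ i : ℤ, m ≤ i → i ≤ n → ∀ h ∈ H,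
          r₁ ≤ (wordDist (S : Set G) h₁ h : ℝ) → (wordDist (S : Set G) h₁ h : ℝ) ≤ r₂ →
          ¬ (wordDist (S : Set G) (α i) h : ℝ) ≤ K) →
        L * (r₂ - r₁) ≤
          ∑ i ∈ Finset.Ico m n, (wordDist (S : Set G) (α i) (α (i + 1)) : ℝ)) :
    ∀ μ c : ℝ, 1 ≤ μ → 0 ≤ c → ∃ C : ℝ, 0 ≤ C ∧
      -- quasi-geodesics defined on intervals of ℝ
      ((∀ a b : ℝ, a ≤ b → ∀ q : ℝ → G,
        (∀ s ∈ Set.Icc a b, ∀ t ∈ Set.Icc a b,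
          |s - t| / μ - c ≤ (wordDist (S : Set G) (q s) (q t) : ℝ) ∧
          (wordDist (S : Set G) (q s) (q t) : ℝ) ≤ μ * |s - t| + c) →
        q a ∈ H → q b ∈ H →
        ∀ s ∈ Set.Icc a b, ∃ h ∈ H, (wordDist (S : Set G) (q s) h : ℝ) ≤ C) ∧
      -- quasi-geodesics defined on intervals of ℤ
      (∀ m n : ℤ, m ≤ n → ∀ q : ℤ → G,
        (∀ s ∈ Set.Icc m n, ∀ t ∈ Set.Icc m n,
          |(s : ℝ) - (t : ℝ)| / μ - c ≤ (wordDist (S : Set G) (q s) (q t) : ℝ) ∧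
          (wordDist (S : Set G) (q s) (q t) : ℝ) ≤ μ * |(s : ℝ) - (t : ℝ)| + c) →
        q m ∈ H → q n ∈ H →
        ∀ s ∈ Set.Icc m n, ∃ h ∈ H, (wordDist (S : Set G) (q s) h : ℝ) ≤ C)) := by
  intro μ c hμ hc
  have hμ0 : (0:ℝ) < μ := by linarith
  obtain ⟨C₁, hC₁, hZ₁⟩ := core_int S hS H hdiv μ c hμ hc
  obtain ⟨C₂, hC₂, hZ₂⟩ := core_int S hS H hdiv μ (c + 1) hμ (by linarith)
  have dtri : ∀ x y z : G, (wordDist (S : Set G) x z : ℝ) ≤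
      wordDist (S : Set G) x y + wordDist (S : Set G) y z := by
    intro x y z; exact_mod_cast wordDist_triangle hS x y z
  refine ⟨C₁ + C₂ + μ + c, by linarith, ?_, ?_⟩
  · -- the real case
    intro a b hab q hq hqa hqb s hs
    set n : ℤ := ⌈b - a⌉ with hn
    have hn0 : (0:ℤ) ≤ n := Int.ceil_nonneg (by linarith)
    have hnlow : b - a ≤ (n : ℝ) := Int.le_ceil _
    have hnup : (n : ℝ) < b - a + 1 := Int.ceil_lt_add_one _
    set qz : ℤ → G := fun i => q (min (a + (i : ℝ)) b) with hqzdef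
    have hmem : ∀ i : ℤ, 0 ≤ i → min (a + (i : ℝ)) b ∈ Set.Icc a b := by
      intro i h0
      constructor
      · apply le_min _ hab
        have : (0:ℝ) ≤ (i : ℝ) := by exact_mod_cast h0
        linarith
      · exact min_le_right _ _
    have hlip : ∀ x y : ℝ, |min x b - min y b| ≤ |x - y| := by
      intro x y
      rcases le_total x b with h1 | h1 <;> rcases le_total y b with h2 | h2
      · rw [min_eq_left h1, min_eq_left h2]
      · rw [min_eq_left h1, min_eq_right h2]
        rw [abs_of_nonpos (by linarith)]
        calc -(x - b) = b - x := by ring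
        _ ≤ y - x := by linarith
        _ ≤ |x - y| := by rw [abs_sub_comm]; exact le_abs_self _
      · rw [min_eq_right h1, min_eq_left h2]
        rw [abs_of_nonneg (by linarith)]
        calc b - y ≤ x - y := by linarith
        _ ≤ |x - y| := le_abs_self _
      · rw [min_eq_right h1, min_eq_right h2]
        simp [abs_nonneg]
    have hrev : ∀ u v : ℤ, 0 ≤ u → u ≤ v → v ≤ n →
        ((v : ℝ) - u) ≤ |min (a + (u : ℝ)) b - min (a + (v : ℝ)) b| + 1 := by
      intro u v hu huv hvn
      have huv' : (u : ℝ) ≤ (v : ℝ) := by exact_mod_cast huv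
      have hvn' : (v : ℝ) ≤ (n : ℝ) := by exact_mod_cast hvn
      rcases le_total (a + (v : ℝ)) b with h2 | h2
      · rw [min_eq_left (by linarith), min_eq_left h2]
        rw [show a + (u:ℝ) - (a + (v:ℝ)) = (u:ℝ) - v by ring, abs_sub_comm,
          abs_of_nonneg (by linarith)]
        linarith
      · rw [min_eq_right h2]
        rcases le_total (a + (u : ℝ)) b with h1 | h1
        · rw [min_eq_left h1, abs_of_nonpos (by linarith)]
          linarith
        · rw [min_eq_right h1]
          simp only [sub_self, abs_zero]
          linarith
    have habs2 : ∀ u v : ℤ, 0 ≤ u → 0 ≤ v → u ≤ n → v ≤ n →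
        |(u : ℝ) - (v : ℝ)| ≤ |min (a + (u : ℝ)) b - min (a + (v : ℝ)) b| + 1 := by
      intro u v hu hv hun hvn
      rcases le_total u v with h | h
      · rw [abs_sub_comm, abs_of_nonneg (by exact_mod_cast sub_nonneg.mpr h)]
        exact hrev u v hu h hvn
      · rw [abs_of_nonneg (by exact_mod_cast sub_nonneg.mpr h),
          abs_sub_comm (min (a + (u:ℝ)) b) (min (a + (v:ℝ)) b)]
        exact hrev v u hv h hun
    have hQG : ∀ u ∈ Set.Icc (0:ℤ) n, ∀ v ∈ Set.Icc (0:ℤ) n,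
        |(u : ℝ) - (v : ℝ)| / μ - (c + 1) ≤ (wordDist (S : Set G) (qz u) (qz v) : ℝ) ∧
        (wordDist (S : Set G) (qz u) (qz v) : ℝ) ≤ μ * |(u : ℝ) - (v : ℝ)| + (c + 1) := by
      intro u hu v hv
      obtain ⟨hu0, hun⟩ := hu
      obtain ⟨hv0, hvn⟩ := hv
      have h1 := hq _ (hmem u hu0) _ (hmem v hv0)
      rw [show q (min (a + (u:ℝ)) b) = qz u from rfl,
        show q (min (a + (v:ℝ)) b) = qz v from rfl] at h1
      have hl := hlip (a + (u:ℝ)) (a + (v:ℝ))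
      rw [show a + (u:ℝ) - (a + (v:ℝ)) = (u:ℝ) - (v:ℝ) by ring] at hl
      have h2 := habs2 u v hu0 hv0 hun hvn
      constructor
      · have hmu1 : 1 / μ ≤ 1 := by
          rw [div_le_one hμ0]; exact hμ
        have hlow := h1.1
        have hstep1 : |(u:ℝ) - (v:ℝ)| / μ ≤
            (|min (a + (u:ℝ)) b - min (a + (v:ℝ)) b| + 1) / μ :=
          (div_le_div_iff_of_pos_right hμ0).mpr h2
        have hstep2 : (|min (a + (u:ℝ)) b - min (a + (v:ℝ)) b| + 1) / μ =
            |min (a + (u:ℝ)) b - min (a + (v:ℝ)) b| / μ + 1 / μ := add_div _ _ _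
        linarith
      · have := h1.2
        have := mul_le_mul_of_nonneg_left hl (le_of_lt hμ0)
        linarith
    have hq0 : qz 0 = q a := by
      simp only [hqzdef, Int.cast_zero, add_zero]
      rw [min_eq_left hab]
    have hqn : qz n = q b := by
      simp only [hqzdef]
      rw [min_eq_right (by linarith)]
    obtain ⟨hsa, hsb⟩ := hs
    set i : ℤ := ⌊s - a⌋ with hidef
    have hi0 : (0:ℤ) ≤ i := Int.floor_nonneg.mpr (by linarith)
    have hifl : (i : ℝ) ≤ s - a := Int.floor_le _
    have hifl2 : s - a < (i : ℝ) + 1 := Int.lt_floor_add_one _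
    have hin : i ≤ n := by
      have h1 : (i : ℝ) ≤ (n : ℝ) := by linarith
      exact_mod_cast h1
    obtain ⟨h, hH, hd⟩ := hZ₂ 0 n hn0 qz hQG (by rw [hq0]; exact hqa) (by rw [hqn]; exact hqb) i ⟨hi0, hin⟩
    have hu : min (a + (i : ℝ)) b = a + (i : ℝ) := min_eq_left (by linarith)
    have hqzi : qz i = q (a + (i : ℝ)) := by rw [hqzdef]; simp only []; rw [hu]
    have hnear : (wordDist (S : Set G) (q s) (qz i) : ℝ) ≤ μ + c := by
      rw [hqzi]
      have hmemi : a + (i : ℝ) ∈ Set.Icc a b := by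
        constructor
        · have : (0:ℝ) ≤ (i:ℝ) := by exact_mod_cast hi0
          linarith
        · linarith
      have := (hq s ⟨hsa, hsb⟩ _ hmemi).2
      have habs : |s - (a + (i:ℝ))| ≤ 1 := by
        rw [abs_of_nonneg (by linarith)]; linarith
      have := mul_le_mul_of_nonneg_left habs (le_of_lt hμ0)
      linarith [this]
    refine ⟨h, hH, ?_⟩
    have := dtri (q s) (qz i) h
    linarith
  · -- the integer case
    intro m n hmn q hq hqm hqn s hs
    obtain ⟨h, hH, hd⟩ := hZ₁ m n hmn q hq hqm hqn s hs
    exact ⟨h, hH, by linarith⟩
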